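/- arXiv:1310.2847 — 3 statements merged into one kernel-verified Lean document; each statement's English description precedes it below -/
import Mathlib

section
/- Let ω be a nonzero complex number with principal argument θ = arg ω satisfying 0 < θ < π (equivalently, Im ω > 0). Define ĉ(θ) = 1 if π/4 ≤ θ ≤ 3π/4 and ĉ(θ) = |sin(2θ)| otherwise. Then for all real numbers A ≥ 0 and B ≥ 0 one has ĉ(θ)·A ≤ |A − ω²·B|, where A and B are regarded as complex numbers via the canonical embedding of ℝ into ℂ and |·| denotes the complex modulus. -/
open Real

/-- The θ-dependent stability constant ĉ(θ): 1 on [π/4, 3π/4], |sin 2θ| otherwise. -/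
noncomputable def chat (θ : ℝ) : ℝ :=
  if π/4 ≤ θ ∧ θ ≤ 3*π/4 then 1 else |Real.sin (2*θ)|

theorem stmt0 (ω : ℂ) (hω : ω ≠ 0) (hθ₁ : 0 < ω.arg) (hθ₂ : ω.arg < π)
    (A B : ℝ) (hA : 0 ≤ A) (hB : 0 ≤ B) :
    chat ω.arg * A ≤ ‖(A : ℂ) - ω^2 * (B : ℂ)‖ := by
  set θ := ω.arg with hθ
  set r := ‖ω‖ with hr
  have hr0 : (0:ℝ) ≤ r := norm_nonneg ω
  have hrne : r ≠ 0 := norm_ne_zero_iff.mpr hω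
  have hre : ω.re = r * Real.cos θ := by
    rw [hθ, Complex.cos_arg hω, ← hr]; field_simp
  have him : ω.im = r * Real.sin θ := by
    rw [hθ, Complex.sin_arg, ← hr]; field_simp
  have hzre : ((A:ℂ) - ω^2 * (B:ℂ)).re = A - (ω.re^2 - ω.im^2) * B := by
    simp [Complex.mul_re, pow_two]
  have hzim : ((A:ℂ) - ω^2 * (B:ℂ)).im = -(2 * ω.re * ω.im * B) := by
    simp [Complex.mul_im, pow_two]; exact Or.inl (by ring)
  have habs : ‖(A:ℂ) - ω^2 * (B:ℂ)‖ =
      Real.sqrt ((A - (ω.re^2 - ω.im^2) * B)^2 + (2 * ω.re * ω.im * B)^2) := by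
    rw [Complex.norm_def, Complex.normSq_apply, hzre, hzim]
    ring_nf
  rw [habs]
  set c := Real.cos θ with hc
  set s := Real.sin θ with hs
  have hsc : s^2 + c^2 = 1 := Real.sin_sq_add_cos_sq θ
  set d := r^2 * B with hd
  have hd0 : 0 ≤ d := mul_nonneg (sq_nonneg r) hB
  rw [hre, him]
  have hrw1 : A - ((r*c)^2 - (r*s)^2) * B = A - (c^2 - s^2) * d := by rw [hd]; ring
  have hrw2 : 2 * (r*c) * (r*s) * B = 2*c*s*d := by rw [hd]; ring
  rw [hrw1, hrw2]
  unfold chat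
  split_ifs with h
  · -- π/4 ≤ θ ≤ 3π/4 : cos 2θ ≤ 0
    have hc2 : Real.cos (2*θ) ≤ 0 := by
      apply Real.cos_nonpos_of_pi_div_two_le_of_le
      · linarith [h.1]
      · linarith [h.2]
    have hcs : c^2 - s^2 ≤ 0 := by
      rw [hc, hs, ← Real.cos_two_mul']; exact hc2
    rw [one_mul]
    apply Real.le_sqrt_of_sq_le
    nlinarith [mul_nonneg (mul_nonneg hA hd0) (neg_nonneg.mpr hcs), sq_nonneg (2*c*s*d)]
  · -- chat = |sin 2θ|
    have hs2 : Real.sin (2*θ) = 2*s*c := Real.sin_two_mul θ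
    rw [hs2]
    apply Real.le_sqrt_of_sq_le
    have hsq : (|2*s*c| * A)^2 = (2*s*c)^2 * A^2 := by rw [mul_pow, sq_abs]
    rw [hsq]
    have key : (A - (c^2-s^2)*d)^2 + (2*c*s*d)^2
        = (2*s*c)^2*A^2 + ((c^2-s^2)*A - d)^2 := by
      linear_combination ((d^2 - A^2)*(1 + s^2 + c^2)) * hsc
    rw [key]
    linarith [sq_nonneg ((c^2-s^2)*A - d)]
end

section
/- Let X be a complex normed vector space, σ : X → X a map with ‖σ(v)‖ = ‖v‖ for all v ∈ X, let a, p : X × X → ℂ be maps, and let c₀ > 0. Assume that for every v ∈ X the complex numbers a(v, σ(v)) and p(v, σ(v)) are real, with a(v, σ(v)) ≥ c₀·‖v‖² and p(v, σ(v)) ≥ 0. Then for every ω ∈ ℂ with 0 < arg ω < π and every v ∈ X there exists t ∈ X with ‖t‖ = ‖v‖ and ĉ(arg ω)·c₀·‖v‖² ≤ |a(v, t) − ω²·p(v, t)|, where ĉ(θ) := 1 if π/4 ≤ θ ≤ 3π/4 and ĉ(θ) := |sin(2θ)| otherwise. -/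
open Real

theorem stmt6 {X : Type*} [NormedAddCommGroup X] [NormedSpace ℂ X]
    (σ : X → X) (hσ : ∀ v, ‖σ v‖ = ‖v‖)
    (a p : X → X → ℂ) (c₀ : ℝ) (hc₀ : 0 < c₀)
    (ha_im : ∀ v, (a v (σ v)).im = 0)
    (ha_re : ∀ v, c₀ * ‖v‖^2 ≤ (a v (σ v)).re)
    (hp_im : ∀ v, (p v (σ v)).im = 0)
    (hp_re : ∀ v, 0 ≤ (p v (σ v)).re) :
    ∀ ω : ℂ, 0 < ω.arg → ω.arg < π → ∀ v : X,
      ∃ t : X, ‖t‖ = ‖v‖ ∧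
        chat ω.arg * c₀ * ‖v‖^2 ≤ ‖a v t - ω^2 * p v t‖ := by
  intro ω h1 h2 v
  refine ⟨σ v, hσ v, ?_⟩
  set θ := ω.arg with hθ
  have hω0 : ω ≠ 0 := by
    intro h
    have : θ = 0 := by rw [hθ, h, Complex.arg_zero]
    linarith
  set r : ℝ := ‖ω‖ with hr
  have habsne : ‖ω‖ ≠ 0 := by simp [hω0]
  have hre : ω.re = r * Real.cos θ := by
    rw [Complex.cos_arg hω0, hr]
    field_simp
  have him : ω.im = r * Real.sin θ := by
    rw [Complex.sin_arg, hr]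
    field_simp
  set A := (a v (σ v)).re with hA
  set P := (p v (σ v)).re with hP
  set z : ℂ := a v (σ v) - ω ^ 2 * p v (σ v) with hz
  have hzre : z.re = A - (ω.re ^ 2 - ω.im ^ 2) * P := by
    simp only [hz, Complex.sub_re, Complex.mul_re, pow_two, Complex.mul_im,
      hp_im v, ha_im v, ← hA, ← hP]
    ring
  have hzim : z.im = -(2 * ω.re * ω.im) * P := by
    simp only [hz, Complex.sub_im, Complex.mul_im, pow_two, Complex.mul_re,
      hp_im v, ha_im v, ← hA, ← hP]
    ring
  have hcos2 : ω.re ^ 2 - ω.im ^ 2 = r ^ 2 * Real.cos (2 * θ) := by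
    rw [hre, him, Real.cos_two_mul']
    ring
  have hsin2 : 2 * ω.re * ω.im = r ^ 2 * Real.sin (2 * θ) := by
    rw [hre, him, Real.sin_two_mul]
    ring
  have hAge : c₀ * ‖v‖ ^ 2 ≤ A := ha_re v
  have hPge : 0 ≤ P := hp_re v
  have hR2 : (‖z‖) ^ 2 = z.re ^ 2 + z.im ^ 2 := by
    rw [Complex.sq_norm, Complex.normSq_apply]; ring
  have hRnn : 0 ≤ ‖z‖ := norm_nonneg z
  have hr2 : (0:ℝ) ≤ r ^ 2 := sq_nonneg r
  have hv2 : (0:ℝ) ≤ c₀ * ‖v‖ ^ 2 := by positivity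
  rw [chat]
  by_cases hcase : π/4 ≤ θ ∧ θ ≤ 3*π/4
  · rw [if_pos hcase]
    have hcosle : Real.cos (2 * θ) ≤ 0 := by
      apply Real.cos_nonpos_of_pi_div_two_le_of_le
      · linarith [hcase.1]
      · linarith [hcase.2]
    have hrez : c₀ * ‖v‖ ^ 2 ≤ z.re := by
      rw [hzre, hcos2]
      nlinarith [mul_nonneg (mul_nonneg hr2 (neg_nonneg.2 hcosle)) hPge]
    calc 1 * c₀ * ‖v‖ ^ 2 = c₀ * ‖v‖ ^ 2 := by ring
      _ ≤ z.re := hrez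
      _ ≤ ‖z‖ := Complex.re_le_norm z
  · rw [if_neg hcase]
    set s := Real.sin (2 * θ) with hs
    set c := Real.cos (2 * θ) with hc
    have hsc : s ^ 2 + c ^ 2 = 1 := by
      rw [hs, hc]; exact Real.sin_sq_add_cos_sq _
    have hkey : s * z.re - c * z.im = s * A := by
      rw [hzre, hzim, hcos2, hsin2]; ring
    have hsq : (s * A) ^ 2 ≤ (‖z‖) ^ 2 := by
      rw [hR2, ← hkey]
      nlinarith [sq_nonneg (c * z.re + s * z.im)]
    have hAnn : 0 ≤ A := le_trans hv2 hAge
    have habs : |s| * A ≤ ‖z‖ := by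
      apply le_of_pow_le_pow_left₀ two_ne_zero hRnn
      calc (|s| * A) ^ 2 = (s * A) ^ 2 := by rw [mul_pow, sq_abs, ← mul_pow]
        _ ≤ _ := hsq
    calc |s| * c₀ * ‖v‖ ^ 2 = |s| * (c₀ * ‖v‖ ^ 2) := by ring
      _ ≤ |s| * A := by
          exact mul_le_mul_of_nonneg_left hAge (abs_nonneg s)
      _ ≤ ‖z‖ := habs
end

section
/- Let X be a real normed vector space, V ⊆ X a linear subspace, and a, p : X × X → ℝ bilinear forms. Assume constants C_cont > 0 and c_coer > 0 with |a(s,t)| ≤ C_cont·‖s‖·‖t‖ for all s,t ∈ X and a(t,t) ≥ c_coer·‖t‖² for all t ∈ X. Let ω ∈ ℝ, u ∈ X, u_h ∈ V, and F : V → ℝ linear with a(u_h,z) − ω²·p(u_h,z) = F(z) for all z ∈ V. Assume a consistency bound M₁ ≥ 0 with |F(z) − a(u,z) + ω²·p(u,z)| ≤ M₁·‖z‖ for all z ∈ V, and a duality bound: there exist α ≥ 0 and β ≥ 0 with |p(u − u_h, z)| ≤ (α·‖u − u_h‖ + β)·‖z‖ for all z ∈ V. If moreover ω²·α ≤ c_coer/2,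 then for every v ∈ V: ‖u − u_h‖ ≤ 2·(1 + C_cont/c_coer)·‖u − v‖ + (2/c_coer)·(M₁ + ω²·β). -/
theorem stmt8 {X : Type*} [NormedAddCommGroup X] [NormedSpace ℝ X]
    (V : Submodule ℝ X) (a p : X →ₗ[ℝ] X →ₗ[ℝ] ℝ)
    (Ccont ccoer : ℝ) (hCcont : 0 < Ccont) (hccoer : 0 < ccoer)
    (ha_bdd : ∀ s t : X, |a s t| ≤ Ccont * ‖s‖ * ‖t‖)
    (ha_coer : ∀ t : X, ccoer * ‖t‖^2 ≤ a t t)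
    (ω : ℝ) (u uh : X) (huh : uh ∈ V)
    (F : V →ₗ[ℝ] ℝ)
    (hdisc : ∀ z : V, a uh z - ω^2 * p uh z = F z)
    (M₁ : ℝ) (hM₁ : 0 ≤ M₁)
    (hcons : ∀ z : V, |F z - a u z + ω^2 * p u z| ≤ M₁ * ‖(z : X)‖)
    (α β : ℝ) (hα : 0 ≤ α) (hβ : 0 ≤ β)
    (hdual : ∀ z : V, |p (u - uh) z| ≤ (α * ‖u - uh‖ + β) * ‖(z : X)‖)
    (hsmall : ω^2 * α ≤ ccoer / 2) :
    ∀ v ∈ V, ‖u - uh‖ ≤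
      2 * (1 + Ccont / ccoer) * ‖u - v‖ + (2 / ccoer) * (M₁ + ω^2 * β) := by
  intro v hv
  have hω2 : (0:ℝ) ≤ ω ^ 2 := sq_nonneg ω
  set z : V := ⟨v - uh, Submodule.sub_mem V hv huh⟩ with hzdef
  have hzv : (z : X) = v - uh := rfl
  -- split a(u - uh, w)
  have hsplit : a (u - uh) (v - uh)
      = -(F z - a u (v - uh) + ω ^ 2 * p u (v - uh))
        + ω ^ 2 * p (u - uh) (v - uh) := by
    have hd := hdisc z
    rw [hzv] at hd
    have h1 : a (u - uh) (v - uh) = a u (v - uh) - a uh (v - uh) := by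
      simp only [map_sub, LinearMap.sub_apply]; ring
    have h2 : p (u - uh) (v - uh) = p u (v - uh) - p uh (v - uh) := by
      simp only [map_sub, LinearMap.sub_apply]; ring
    rw [h1, h2]; linarith
  -- bound a(v - uh, v - uh)
  have hb1 : a (v - u) (v - uh) ≤ Ccont * ‖u - v‖ * ‖v - uh‖ := by
    have := ha_bdd (v - u) (v - uh)
    have hn : ‖v - u‖ = ‖u - v‖ := norm_sub_rev v u
    calc a (v - u) (v - uh) ≤ |a (v - u) (v - uh)| := le_abs_self _
      _ ≤ Ccont * ‖v - u‖ * ‖v - uh‖ := this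
      _ = Ccont * ‖u - v‖ * ‖v - uh‖ := by rw [hn]
  have hb2 : a (u - uh) (v - uh)
      ≤ (M₁ + ω ^ 2 * (α * ‖u - uh‖ + β)) * ‖v - uh‖ := by
    have hc := hcons z
    have hdu := hdual z
    rw [hzv] at hc hdu
    have h3 : -(F z - a u (v - uh) + ω ^ 2 * p u (v - uh)) ≤ M₁ * ‖v - uh‖ := by
      have := neg_abs_le (F z - a u (v - uh) + ω ^ 2 * p u (v - uh))
      linarith
    have h4 : ω ^ 2 * p (u - uh) (v - uh)
        ≤ ω ^ 2 * ((α * ‖u - uh‖ + β) * ‖v - uh‖) := by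
      apply mul_le_mul_of_nonneg_left _ hω2
      exact (le_abs_self _).trans hdu
    rw [hsplit]; nlinarith
  have hsum : a (v - uh) (v - uh) = a (v - u) (v - uh) + a (u - uh) (v - uh) := by
    have h : v - uh = (v - u) + (u - uh) := by abel
    rw [h]; simp only [map_add, map_sub, LinearMap.add_apply, LinearMap.sub_apply]; ring
  have hcoer := ha_coer (v - uh)
  have hkey : ccoer * ‖v - uh‖
      ≤ Ccont * ‖u - v‖ + M₁ + ω ^ 2 * α * ‖u - uh‖ + ω ^ 2 * β := by
    rcases (norm_nonneg (v - uh)).eq_or_lt with h0 | h0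
    · rw [← h0, mul_zero]
      have := mul_nonneg (mul_nonneg hω2 hα) (norm_nonneg (u - uh))
      have := mul_nonneg hCcont.le (norm_nonneg (u - v))
      have := mul_nonneg hω2 hβ
      linarith
    · have hstep : ccoer * ‖v - uh‖ ^ 2
          ≤ (Ccont * ‖u - v‖ + M₁ + ω ^ 2 * α * ‖u - uh‖ + ω ^ 2 * β) * ‖v - uh‖ := by
        rw [hsum] at hcoer
        nlinarith
      have := (mul_le_mul_iff_of_pos_right h0).mp (by nlinarith : (ccoer * ‖v - uh‖) * ‖v - uh‖ ≤ (Ccont * ‖u - v‖ + M₁ + ω ^ 2 * α * ‖u - uh‖ + ω ^ 2 * β) * ‖v - uh‖)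
      exact this
  have htri : ‖u - uh‖ ≤ ‖u - v‖ + ‖v - uh‖ := by
    have : u - uh = (u - v) + (v - uh) := by abel
    rw [this]; exact norm_add_le _ _
  have hc1 : ccoer * (Ccont / ccoer) = Ccont := mul_div_cancel₀ _ hccoer.ne'
  have hc2 : ccoer * (2 / ccoer) = 2 := mul_div_cancel₀ _ hccoer.ne'
  have hsm : ω ^ 2 * α * ‖u - uh‖ ≤ (ccoer / 2) * ‖u - uh‖ :=
    mul_le_mul_of_nonneg_right hsmall (norm_nonneg _)
  rw [← mul_le_mul_iff_of_pos_left hccoer]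
  have hrhs : ccoer * (2 * (1 + Ccont / ccoer) * ‖u - v‖ + 2 / ccoer * (M₁ + ω ^ 2 * β))
      = 2 * (ccoer + Ccont) * ‖u - v‖ + 2 * (M₁ + ω ^ 2 * β) := by
    field_simp
  rw [hrhs]
  have htri' := mul_le_mul_of_nonneg_left htri hccoer.le
  linarith
end
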